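/- Fix x ∈ ℝ^d and λ ≥ 0, and for S ∈ ℝ^{d×K} and g ∈ ℝ^K let E(g, S) = (1/2)‖x − Sg‖₂² + λ‖g‖₁. Let S₀ ∈ ℝ^{d×K}, and suppose g* : ℝ^{d×K} → ℝ^K is a map, continuous at S₀, such that for every S in some neighborhood of S₀ the point g*(S) is a global minimizer of E(·, S) over ℝ^K. Then the value function ℒ(S) = E(g*(S), S) is Fréchet differentiable at S₀, with derivative the linear map W ↦ −⟨x − S₀·g*(S₀), W·g*(S₀)⟩ on ℝ^{d×K}; equivalently, identifying the gradient with a d×K matrix, ∇ℒ(S₀) = −r·(g*(S₀))ᵀ where r = x − S₀·g*(S₀) is the reconstruction residual. In particular, the Atomic-Hebb update ΔS ∝ r·(g*)ᵀ is exact gradient descent on the equilibrium energy. -/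

import Mathlib

open Filter Asymptotics

/-- Expansion of the quadratic residual term around `S₀`. -/
lemma vn_quad_expand {d K : ℕ} (x : Fin d → ℝ) (S₀ S : Fin d → Fin K → ℝ)
    (g : Fin K → ℝ) :
    (∑ a, (x a - ∑ i, S a i * g i) ^ 2)
      = (∑ a, (x a - ∑ i, S₀ a i * g i) ^ 2)
        - 2 * ∑ a, (x a - ∑ j, S₀ a j * g j) * (∑ i, (S a i - S₀ a i) * g i)
        + ∑ a, (∑ i, (S a i - S₀ a i) * g i) ^ 2 := by
  have h : ∀ a, (x a - ∑ i, S a i * g i)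
      = (x a - ∑ i, S₀ a i * g i) - ∑ i, (S a i - S₀ a i) * g i := by
    intro a
    have : ∑ i, (S a i - S₀ a i) * g i
        = (∑ i, S a i * g i) - ∑ i, S₀ a i * g i := by
      rw [← Finset.sum_sub_distrib]
      exact Finset.sum_congr rfl fun i _ => by ring
    rw [this]; ring
  calc ∑ a, (x a - ∑ i, S a i * g i) ^ 2
      = ∑ a, ((x a - ∑ i, S₀ a i * g i) ^ 2
          - 2 * ((x a - ∑ j, S₀ a j * g j) * (∑ i, (S a i - S₀ a i) * g i))
          + (∑ i, (S a i - S₀ a i) * g i) ^ 2) := by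
        exact Finset.sum_congr rfl fun a _ => by rw [h a]; ring
    _ = _ := by
        rw [Finset.sum_add_distrib, Finset.sum_sub_distrib, Finset.mul_sum]

/-- Danskin / envelope theorem for the Vector Network equilibrium energy: if `g*(S)` is a
global minimizer of `E(·, S) = ½‖x − Sg‖₂² + λ‖g‖₁` for all `S` near `S₀` and `g*` is
continuous at `S₀`, then the value function `ℒ(S) = E(g*(S), S)` is Fréchet
differentiable at `S₀` with derivative `W ↦ −⟨x − S₀ g*(S₀), W g*(S₀)⟩`, i.e.
`∇ℒ(S₀) = −r (g*(S₀))ᵀ` with residual `r = x − S₀ g*(S₀)`. -/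
theorem atomic_hebb_danskin {d K : ℕ} (x : Fin d → ℝ) (lam : ℝ) (hlam : 0 ≤ lam)
    (E : (Fin K → ℝ) → (Fin d → Fin K → ℝ) → ℝ)
    (hE : ∀ (g : Fin K → ℝ) (S : Fin d → Fin K → ℝ),
      E g S = (1 / 2) * (∑ a, (x a - ∑ i, S a i * g i) ^ 2) + lam * ∑ i, |g i|)
    (S₀ : Fin d → Fin K → ℝ)
    (gstar : (Fin d → Fin K → ℝ) → (Fin K → ℝ))
    (hcont : ContinuousAt gstar S₀)
    (hmin : ∀ᶠ S in nhds S₀, ∀ w : Fin K → ℝ, E (gstar S) S ≤ E w S) :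
    ∃ D : (Fin d → Fin K → ℝ) →L[ℝ] ℝ,
      (∀ W : Fin d → Fin K → ℝ,
        D W = -(∑ a, (x a - ∑ i, S₀ a i * gstar S₀ i) * (∑ i, W a i * gstar S₀ i))) ∧
      HasFDerivAt (fun S => E (gstar S) S) D S₀ := by
  classical
  set g₀ : Fin K → ℝ := gstar S₀ with hg₀
  set r : Fin d → ℝ := fun a => x a - ∑ i, S₀ a i * g₀ i with hr
  -- the candidate derivative as a linear map
  have hmul : ∀ (t : ℝ) (W : Fin d → Fin K → ℝ) (a : Fin d),
      ∑ i, (t * W a i) * g₀ i = t * ∑ i, W a i * g₀ i := by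
    intro t W a
    rw [Finset.mul_sum]
    exact Finset.sum_congr rfl fun i _ => by ring
  let L : (Fin d → Fin K → ℝ) →ₗ[ℝ] ℝ :=
    { toFun := fun W => -(∑ a, r a * ∑ i, W a i * g₀ i)
      map_add' := by
        intro W V
        simp [add_mul, Finset.sum_add_distrib, mul_add, add_comm]
      map_smul' := by
        intro t W
        simp only [Pi.smul_apply, smul_eq_mul, hmul, RingHom.id_apply]
        have h5 : ∑ a, r a * (t * ∑ i, W a i * g₀ i)
            = t * ∑ a, r a * ∑ i, W a i * g₀ i := by
          rw [Finset.mul_sum]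
          exact Finset.sum_congr rfl fun a _ => by ring
        rw [h5]; ring }
  let D : (Fin d → Fin K → ℝ) →L[ℝ] ℝ := LinearMap.toContinuousLinearMap L
  have hD : ∀ W : Fin d → Fin K → ℝ, D W = -(∑ a, r a * ∑ i, W a i * g₀ i) := fun W => rfl
  refine ⟨D, fun W => hD W, ?_⟩
  -- abbreviations
  set A : (Fin K → ℝ) → (Fin d → Fin K → ℝ) → ℝ :=
    fun g S => ∑ a, ∑ i, ((x a - ∑ j, S₀ a j * g j) * g i) * (S a i - S₀ a i) with hA
  set B : (Fin K → ℝ) → (Fin d → Fin K → ℝ) → ℝ :=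
    fun g S => ∑ a, (∑ i, (S a i - S₀ a i) * g i) ^ 2 with hB
  have hTA : ∀ (g : Fin K → ℝ) (S : Fin d → Fin K → ℝ),
      ∑ a, (x a - ∑ j, S₀ a j * g j) * (∑ i, (S a i - S₀ a i) * g i) = A g S := by
    intro g S
    refine Finset.sum_congr rfl fun a _ => ?_
    rw [Finset.mul_sum]
    exact Finset.sum_congr rfl fun i _ => by ring
  have key : ∀ (g : Fin K → ℝ) (S : Fin d → Fin K → ℝ),
      E g S - E g S₀ = -(A g S) + (1 / 2) * B g S := by
    intro g S
    rw [hE, hE, vn_quad_expand x S₀ S g, ← hTA g S]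
    simp only [hB]
    ring
  have hDA : ∀ S : Fin d → Fin K → ℝ, D (S - S₀) = -(A g₀ S) := by
    intro S
    rw [hD]
    congr 1
    refine Finset.sum_congr rfl fun a _ => ?_
    rw [Finset.mul_sum]
    exact Finset.sum_congr rfl fun i _ => by simp [Pi.sub_apply]; ring
  have hBnn : ∀ (g : Fin K → ℝ) (S : Fin d → Fin K → ℝ), 0 ≤ B g S :=
    fun g S => Finset.sum_nonneg fun a _ => sq_nonneg _
  -- asymptotics
  have hnorm : Tendsto (fun S : Fin d → Fin K → ℝ => ‖S - S₀‖) (nhds S₀) (nhds 0) :=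
    tendsto_norm_sub_self S₀
  have hcomp : ∀ (a : Fin d) (i : Fin K),
      (fun S : Fin d → Fin K → ℝ => S a i - S₀ a i) =O[nhds S₀]
        fun S => ‖S - S₀‖ := by
    intro a i
    refine isBigO_of_le _ fun S => ?_
    have h1 : ‖(S - S₀) a i‖ ≤ ‖(S - S₀) a‖ := norm_le_pi_norm ((S - S₀) a) i
    have h2 : ‖(S - S₀) a‖ ≤ ‖S - S₀‖ := norm_le_pi_norm (S - S₀) a
    simpa [Pi.sub_apply, Real.norm_eq_abs, abs_of_nonneg (norm_nonneg (S - S₀))]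
      using h1.trans h2
  have hu : ∀ a : Fin d,
      (fun S : Fin d → Fin K → ℝ => ∑ i, (S a i - S₀ a i) * g₀ i) =O[nhds S₀]
        fun S => ‖S - S₀‖ := by
    intro a
    refine IsBigO.fun_sum fun i _ => ?_
    simpa [mul_comm] using (hcomp a i).const_mul_left (g₀ i)
  have hup : (fun S : Fin d → Fin K → ℝ => (1 / 2) * B g₀ S) =o[nhds S₀]
      fun S => ‖S - S₀‖ := by
    refine IsLittleO.const_mul_left ?_ _
    refine IsLittleO.fun_sum fun a _ => ?_
    have h0 : Tendsto (fun S : Fin d → Fin K → ℝ => ∑ i, (S a i - S₀ a i) * g₀ i)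
        (nhds S₀) (nhds 0) := (hu a).trans_tendsto hnorm
    have h1 : (fun S : Fin d → Fin K → ℝ => ∑ i, (S a i - S₀ a i) * g₀ i)
        =o[nhds S₀] (fun _ => (1 : ℝ)) := (isLittleO_one_iff ℝ).2 h0
    have := h1.mul_isBigO (hu a)
    simpa [pow_two] using this
  have hgt : Tendsto gstar (nhds S₀) (nhds g₀) := hcont
  have hlo : (fun S : Fin d → Fin K → ℝ => A g₀ S - A (gstar S) S) =o[nhds S₀]
      fun S => ‖S - S₀‖ := by
    have heq : ∀ S : Fin d → Fin K → ℝ, A g₀ S - A (gstar S) S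
        = ∑ a, ∑ i, (((x a - ∑ j, S₀ a j * g₀ j) * g₀ i
            - (x a - ∑ j, S₀ a j * gstar S j) * gstar S i) * (S a i - S₀ a i)) := by
      intro S
      simp only [hA]
      rw [← Finset.sum_sub_distrib]
      refine Finset.sum_congr rfl fun a _ => ?_
      rw [← Finset.sum_sub_distrib]
      exact Finset.sum_congr rfl fun i _ => by ring
    refine IsLittleO.congr' ?_ (Eventually.of_forall fun S => (heq S).symm) (by rfl)
    refine IsLittleO.fun_sum fun a _ => ?_
    refine IsLittleO.fun_sum fun i _ => ?_
    have hφ : Continuous fun g : Fin K → ℝ => (x a - ∑ j, S₀ a j * g j) * g i := by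
      exact ((continuous_const.sub (continuous_finset_sum _ fun j _ =>
        continuous_const.mul (continuous_apply j))).mul (continuous_apply i))
    have hc0 : Tendsto (fun S : Fin d → Fin K → ℝ =>
        (x a - ∑ j, S₀ a j * g₀ j) * g₀ i
          - (x a - ∑ j, S₀ a j * gstar S j) * gstar S i) (nhds S₀) (nhds 0) := by
      have := (hφ.tendsto g₀).comp hgt
      have h2 := tendsto_const_nhds (x := (x a - ∑ j, S₀ a j * g₀ j) * g₀ i)
        (f := nhds S₀)
      simpa using h2.sub this
    have h1 := ((isLittleO_one_iff ℝ).2 hc0).mul_isBigO (hcomp a i)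
    simpa using h1
  -- sandwich
  have hmin₀ := hmin.self_of_nhds
  rw [hasFDerivAt_iff_isLittleO, ← isLittleO_norm_right]
  rw [isLittleO_iff]
  intro ε hε
  filter_upwards [hmin, hup.def hε, hlo.def hε] with S hS hupS hloS
  set f : (Fin d → Fin K → ℝ) → ℝ := fun S => E (gstar S) S with hf
  have hupper : f S - f S₀ - D (S - S₀) ≤ (1 / 2) * B g₀ S := by
    have h1 : f S ≤ E g₀ S := hS g₀
    have h2 : E g₀ S - E g₀ S₀ = -(A g₀ S) + (1 / 2) * B g₀ S := key g₀ S
    have h3 : f S₀ = E g₀ S₀ := rfl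
    rw [hDA S]
    calc f S - f S₀ - -(A g₀ S) ≤ E g₀ S - E g₀ S₀ + A g₀ S := by
          rw [h3]; linarith
      _ = (1 / 2) * B g₀ S := by rw [h2]; ring
  have hlower : A g₀ S - A (gstar S) S ≤ f S - f S₀ - D (S - S₀) := by
    have h1 : f S₀ ≤ E (gstar S) S₀ := hmin₀ (gstar S)
    have h2 : E (gstar S) S - E (gstar S) S₀
        = -(A (gstar S) S) + (1 / 2) * B (gstar S) S := key (gstar S) S
    have h3 : f S = E (gstar S) S := rfl
    have h4 := hBnn (gstar S) S
    rw [hDA S, h3]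
    linarith
  have habs : |f S - f S₀ - D (S - S₀)| ≤ ε * ‖S - S₀‖ := by
    have hu' : |(1 / 2) * B g₀ S| ≤ ε * ‖S - S₀‖ := by
      rw [abs_mul, show |(1:ℝ)/2| = 1/2 by norm_num]
      simpa [Real.norm_eq_abs, abs_of_nonneg (norm_nonneg (S - S₀))] using hupS
    have hl' : |A g₀ S - A (gstar S) S| ≤ ε * ‖S - S₀‖ := by
      simpa [Real.norm_eq_abs, abs_of_nonneg (norm_nonneg (S - S₀))] using hloS
    rw [abs_le]
    constructor
    · have := (abs_le.1 hl').1
      linarith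
    · have := (abs_le.1 hu').2
      linarith
  simpa [Real.norm_eq_abs, abs_of_nonneg (norm_nonneg (S - S₀))] using habs
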